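/- arXiv:1801.00581 — 2 statements merged into one kernel-verified Lean document; each statement's English description precedes it below -/
import Mathlib

section
/- Let (G,·,D,⋆) be a probabilistic invariant metric group with ⋆ sup-continuous. Then the sup-convolution ⊙ is associative on maps G → Δ⁺: (f ⊙ g) ⊙ h = f ⊙ (g ⊙ h). -/
open Filter Topology Set

/-- A (real-domain representation of a) distribution function in Δ⁺ :
nondecreasing, with values in [0,1], left-continuous, vanishing on (-∞,0]. -/
def MemDP (f : ℝ → ℝ) : Prop :=
  Monotone f ∧ (∀ t, 0 ≤ f t) ∧ (∀ t, f t ≤ 1) ∧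
  (∀ t : ℝ, Tendsto f (nhdsWithin t (Set.Iio t)) (nhds (f t))) ∧
  (∀ t ≤ (0:ℝ), f t = 0)

/-- The distribution H₀. -/
noncomputable def H0 : ℝ → ℝ := fun t => if 0 < t then 1 else 0

/-- The distribution H_∞ (zero at every finite point). -/
def Hinf : ℝ → ℝ := fun _ => 0

/-- Pointwise order on distribution functions. -/
def dpLE (f g : ℝ → ℝ) : Prop := ∀ t, f t ≤ g t

/-- Triangle function on Δ⁺. -/
structure IsTriangle (star : (ℝ → ℝ) → (ℝ → ℝ) → (ℝ → ℝ)) : Prop where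
  mem : ∀ f g, MemDP f → MemDP g → MemDP (star f g)
  comm : ∀ f g, MemDP f → MemDP g → star f g = star g f
  assoc : ∀ f g h, MemDP f → MemDP g → MemDP h →
    star f (star g h) = star (star f g) h
  ident : ∀ f, MemDP f → star f H0 = f
  mono : ∀ f g h, MemDP f → MemDP g → MemDP h → dpLE f g → dpLE (star f h) (star g h)

/-- Sup-continuity of a triangle function (suprema in Δ⁺ are pointwise). -/
def SupCont (star : (ℝ → ℝ) → (ℝ → ℝ) → (ℝ → ℝ)) : Prop :=
  ∀ (I : Type) (_ : Nonempty I) (F : I → ℝ → ℝ) (L : ℝ → ℝ),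
    (∀ i, MemDP (F i)) → MemDP L →
    ∀ t, (⨆ i, star (F i) L t) = star (fun s => ⨆ i, F i s) L t

/-- Weak convergence in Δ⁺: pointwise convergence at each continuity point of the limit. -/
def WConv (Fn : ℕ → ℝ → ℝ) (F : ℝ → ℝ) : Prop :=
  ∀ t, ContinuousAt F t → Tendsto (fun n => Fn n t) atTop (nhds (F t))

/-- Continuity of a triangle function w.r.t. weak convergence. -/
def StarCont (star : (ℝ → ℝ) → (ℝ → ℝ) → (ℝ → ℝ)) : Prop :=
  ∀ (Fn Ln : ℕ → ℝ → ℝ) (F L : ℝ → ℝ),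
    (∀ n, MemDP (Fn n)) → (∀ n, MemDP (Ln n)) → MemDP F → MemDP L →
    WConv Fn F → WConv Ln L → WConv (fun n => star (Fn n) (Ln n)) (star F L)

/-- Probabilistic metric space (G, D, ⋆). -/
structure IsPMS {G : Type} (D : G → G → ℝ → ℝ)
    (star : (ℝ → ℝ) → (ℝ → ℝ) → (ℝ → ℝ)) : Prop where
  tri : IsTriangle star
  mem : ∀ p q, MemDP (D p q)
  eq_iff : ∀ p q, D p q = H0 ↔ p = q
  symm : ∀ p q, D p q = D q p
  triangle_ineq : ∀ p q r, dpLE (star (D p q) (D q r)) (D p r)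

/-- Probabilistic invariant metric group. -/
structure IsPIMG {G : Type} [Group G] (D : G → G → ℝ → ℝ)
    (star : (ℝ → ℝ) → (ℝ → ℝ) → (ℝ → ℝ)) extends IsPMS D star : Prop where
  invL : ∀ p q r : G, D (r * p) (r * q) = D p q
  invR : ∀ p q r : G, D (p * r) (q * r) = D p q

/-- Probabilistic 1-Lipschitz map. -/
def Lip1 {G : Type} (D : G → G → ℝ → ℝ) (star : (ℝ → ℝ) → (ℝ → ℝ) → (ℝ → ℝ))
    (f : G → ℝ → ℝ) : Prop :=
  (∀ x, MemDP (f x)) ∧ ∀ x y, dpLE (star (D x y) (f y)) (f x)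

/-- δ_a(y) = D(y,a). -/
def dlt {G : Type} (D : G → G → ℝ → ℝ) (a : G) : G → ℝ → ℝ := fun y => D y a

/-- Sup-convolution (f ⊙ g)(x) = sup_{yz = x} f(y) ⋆ g(z), pointwise. -/
noncomputable def sconv {G : Type} [Group G] (star : (ℝ → ℝ) → (ℝ → ℝ) → (ℝ → ℝ))
    (f g : G → ℝ → ℝ) : G → ℝ → ℝ :=
  fun x t => ⨆ y : G, star (f (x * y⁻¹)) (g y) t

/-- Cauchy sequence for a probabilistic metric: D(a_n, a_p) → H₀ weakly. -/
def PCauchy {G : Type} (D : G → G → ℝ → ℝ) (a : ℕ → G) : Prop :=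
  ∀ t > (0:ℝ), ∀ ε > (0:ℝ), ∃ N, ∀ n ≥ N, ∀ p ≥ N, 1 - ε ≤ D (a n) (a p) t

/-- Π(G): probabilistic 1-Lipschitz maps that are pointwise weak limits of δ_{a_n}
for some Cauchy sequence (a_n). -/
def InPi {G : Type} (D : G → G → ℝ → ℝ) (star : (ℝ → ℝ) → (ℝ → ℝ) → (ℝ → ℝ))
    (f : G → ℝ → ℝ) : Prop :=
  Lip1 D star f ∧ ∃ a : ℕ → G, PCauchy D a ∧ ∀ x, WConv (fun n => D (a n) x) (f x)

/-- 𝔻(f,g) = sup_{x∈G} f(x) ⋆ g(x), pointwise. -/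
noncomputable def DD {G : Type} (star : (ℝ → ℝ) → (ℝ → ℝ) → (ℝ → ℝ))
    (f g : G → ℝ → ℝ) : ℝ → ℝ :=
  fun t => ⨆ x : G, star (f x) (g x) t

/-- t-norm on [0,1]. -/
structure IsTnorm (T : ℝ → ℝ → ℝ) : Prop where
  mem : ∀ x ∈ Set.Icc (0:ℝ) 1, ∀ y ∈ Set.Icc (0:ℝ) 1, T x y ∈ Set.Icc (0:ℝ) 1
  comm : ∀ x y, T x y = T y x
  assoc : ∀ x y z, T x (T y z) = T (T x y) z
  mono : ∀ x y z, y ≤ z → T x y ≤ T x z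
  one : ∀ x ∈ Set.Icc (0:ℝ) 1, T x 1 = x

/-- Left-continuity of a t-norm (in each variable; by commutativity one suffices). -/
def LeftCtsTnorm (T : ℝ → ℝ → ℝ) : Prop :=
  ∀ y x : ℝ, Tendsto (fun s => T s y) (nhdsWithin x (Set.Iio x)) (nhds (T x y))

/-- The triangle function ⋆_T : (F ⋆_T L)(t) = sup_{s+u=t} T(F(s), L(u)). -/
noncomputable def starT (T : ℝ → ℝ → ℝ) (f g : ℝ → ℝ) : ℝ → ℝ :=
  fun t => ⨆ s : ℝ, T (f s) (g (t - s))

lemma memDP_iSup {I : Type} [Nonempty I] (F : I → ℝ → ℝ) (hF : ∀ i, MemDP (F i)) :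
    MemDP (fun t => ⨆ i, F i t) := by
  have bdd : ∀ t, BddAbove (Set.range fun i => F i t) := by
    intro t
    refine ⟨1, ?_⟩
    rintro _ ⟨i, rfl⟩
    exact (hF i).2.2.1 t
  have mono : Monotone (fun t => ⨆ i, F i t) := by
    intro s t hst
    exact ciSup_mono (bdd t) fun i => (hF i).1 hst
  refine ⟨mono, ?_, ?_, ?_, ?_⟩
  · intro t
    exact le_ciSup_of_le (bdd t) (Classical.arbitrary I) ((hF _).2.1 t)
  · intro t
    exact ciSup_le fun i => (hF i).2.2.1 t
  · intro t
    rw [tendsto_order]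
    constructor
    · intro a ha
      obtain ⟨i, hi⟩ := exists_lt_of_lt_ciSup ha
      filter_upwards [(tendsto_order.1 ((hF i).2.2.2.1 t)).1 a hi] with s hs
      exact hs.trans_le (le_ciSup (bdd s) i)
    · intro a ha
      filter_upwards [self_mem_nhdsWithin] with s hs
      exact lt_of_le_of_lt (mono (le_of_lt hs)) ha
  · intro t ht
    have h0 : ∀ i, F i t = 0 := fun i => (hF i).2.2.2.2 t ht
    simp [h0]

lemma ciSup_swap {I : Type} [Nonempty I] (A : I → I → ℝ) (hA : ∀ y z, A y z ≤ 1) :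
    ⨆ y, ⨆ z, A y z = ⨆ z, ⨆ y, A y z := by
  have key : ∀ (B : I → I → ℝ), (∀ y z, B y z ≤ 1) →
      (⨆ y, ⨆ z, B y z) ≤ ⨆ z, ⨆ y, B y z := by
    intro B hB
    refine ciSup_le fun y => ciSup_le fun z => ?_
    have h1 : B y z ≤ ⨆ y', B y' z :=
      le_ciSup (⟨1, by rintro _ ⟨i, rfl⟩; exact hB i z⟩ :
        BddAbove (Set.range fun y' => B y' z)) y
    have h2 : (⨆ y', B y' z) ≤ ⨆ z', ⨆ y', B y' z' :=
      le_ciSup (⟨1, by rintro _ ⟨i, rfl⟩; exact ciSup_le fun j => hB j i⟩ :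
        BddAbove (Set.range fun z' => ⨆ y', B y' z')) z
    exact h1.trans h2
  exact le_antisymm (key A hA) (key (fun z y => A y z) (fun z y => hA y z))

/-- with ⋆ sup-continuous, the sup-convolution is associative. -/
theorem stmt10 {G : Type} [Group G] (D : G → G → ℝ → ℝ)
    (star : (ℝ → ℝ) → (ℝ → ℝ) → (ℝ → ℝ)) (h : IsPIMG D star)
    (hsc : SupCont star) (f g k : G → ℝ → ℝ)
    (hf : ∀ x, MemDP (f x)) (hg : ∀ x, MemDP (g x)) (hk : ∀ x, MemDP (k x)) :
    sconv star (sconv star f g) k = sconv star f (sconv star g k) := by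
  have nI : Nonempty G := ⟨1⟩
  have memstar : ∀ (a b : ℝ → ℝ), MemDP a → MemDP b → MemDP (star a b) :=
    h.tri.mem
  have memgk : ∀ y : G, MemDP (sconv star g k y) := by
    intro y
    exact memDP_iSup (fun z => star (g (y * z⁻¹)) (k z))
      (fun z => memstar _ _ (hg _) (hk _))
  funext x t
  have LHS : sconv star (sconv star f g) k x t =
      ⨆ z, ⨆ y, star (star (f (x * z⁻¹ * y⁻¹)) (g y)) (k z) t := by
    show (⨆ z, star (sconv star f g (x * z⁻¹)) (k z) t) = _
    refine iSup_congr fun z => ?_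
    exact (hsc G nI (fun y => star (f (x * z⁻¹ * y⁻¹)) (g y)) (k z)
      (fun y => memstar _ _ (hf _) (hg _)) (hk z) t).symm
  have RHS : sconv star f (sconv star g k) x t =
      ⨆ y, ⨆ z, star (star (f (x * y⁻¹)) (g (y * z⁻¹))) (k z) t := by
    show (⨆ y, star (f (x * y⁻¹)) (sconv star g k y) t) = _
    refine iSup_congr fun y => ?_
    rw [h.tri.comm _ _ (hf _) (memgk y)]
    have step : star (sconv star g k y) (f (x * y⁻¹)) t =
        ⨆ z, star (star (g (y * z⁻¹)) (k z)) (f (x * y⁻¹)) t :=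
      (hsc G nI (fun z => star (g (y * z⁻¹)) (k z)) (f (x * y⁻¹))
        (fun z => memstar _ _ (hg _) (hk _)) (hf _) t).symm
    rw [step]
    refine iSup_congr fun z => ?_
    rw [h.tri.comm _ _ (memstar _ _ (hg _) (hk _)) (hf _),
      h.tri.assoc _ _ _ (hf _) (hg _) (hk _)]
  rw [LHS, RHS]
  have hb : ∀ (a b c : G), star (star (f a) (g b)) (k c) t ≤ 1 :=
    fun a b c => (memstar _ _ (memstar _ _ (hf _) (hg _)) (hk _)).2.2.1 t
  rw [ciSup_swap (fun y z => star (star (f (x * y⁻¹)) (g (y * z⁻¹))) (k z) t)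
    (fun y z => hb _ _ _)]
  refine iSup_congr fun z => ?_
  have surj : Function.Surjective (fun w : G => w * z) :=
    (Equiv.mulRight z).surjective
  conv_rhs => rw [← surj.iSup_comp
    (fun y => star (star (f (x * y⁻¹)) (g (y * z⁻¹))) (k z) t)]
  refine iSup_congr fun w => ?_
  simp [mul_assoc, mul_inv_rev]
end

section
/- Let (G,D,⋆) be a probabilistic metric space with ⋆ continuous. If f,g ∈ Π(G) with associated Cauchy sequences (a_n),(b_n) (so D(a_n,x) → f(x) and D(b_n,x) → g(x) weakly for all x), then sup_{x∈G} f(x) ⋆ g(x) = lim_{n,m} D(a_n,b_m) = lim_n D(a_n,b_n) = lim_m f(b_m) = lim_n g(a_n); in particular this value is independent of the choice of Cauchy sequences. -/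
open Filter Topology Set

section Stmt13Aux

open Filter Topology Set

lemma exists_cont {h : ℝ → ℝ} (hm : Monotone h) {u v : ℝ} (huv : u < v) :
    ∃ s, s ∈ Ioo u v ∧ ContinuousAt h s := by
  by_contra hcon
  push_neg at hcon
  have : (Ioo u v).Countable := by
    apply hm.countable_not_continuousAt.mono
    intro x hx
    exact hcon x hx
  rw [← Cardinal.le_aleph0_iff_set_countable, Cardinal.mk_Ioo_real huv] at this
  exact absurd this (not_le.2 Cardinal.aleph0_lt_continuum)

lemma memDP_jf {c t : ℝ} (h0 : 0 ≤ c) (h1 : c ≤ 1) (ht : 0 ≤ t) :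
    MemDP (fun s => if t < s then c else 0) := by
  refine ⟨?_, ?_, ?_, ?_, ?_⟩
  · intro u v huv
    dsimp only
    split_ifs with h2 h3
    · exact le_rfl
    · exact absurd (lt_of_lt_of_le h2 huv) h3
    · exact h0
    · exact le_rfl
  · intro s; dsimp only; split_ifs; exacts [h0, le_rfl]
  · intro s; dsimp only; split_ifs; exacts [h1, by linarith]
  · intro u
    dsimp only
    rcases le_or_gt u t with hu | hu
    · rw [if_neg (not_lt.2 hu)]
      refine Tendsto.congr' ?_ tendsto_const_nhds
      filter_upwards [self_mem_nhdsWithin] with s hs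
      exact (if_neg (not_lt.2 ((le_of_lt hs).trans hu))).symm
    · rw [if_pos hu]
      refine Tendsto.congr' ?_ tendsto_const_nhds
      filter_upwards [nhdsWithin_le_nhds (Ioi_mem_nhds hu)] with s hs
      exact (if_pos hs).symm
  · intro s hs
    exact if_neg (not_lt.2 (hs.trans ht))

lemma memDP_H0 : MemDP H0 :=
  memDP_jf zero_le_one le_rfl le_rfl

lemma wconv_comp {Fn : ℕ → ℝ → ℝ} {F : ℝ → ℝ} (h : WConv Fn F) {φ : ℕ → ℕ}
    (hφ : Tendsto φ atTop atTop) : WConv (fun k => Fn (φ k)) F :=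
  fun t ht => (h t ht).comp hφ

lemma lower_pair {star : (ℝ → ℝ) → (ℝ → ℝ) → (ℝ → ℝ)} (hc : StarCont star)
    {Fn Lm : ℕ → ℝ → ℝ} {F Lg : ℝ → ℝ}
    (hFn : ∀ n, MemDP (Fn n)) (hLm : ∀ n, MemDP (Lm n)) (hF : MemDP F) (hLg : MemDP Lg)
    (hwF : WConv Fn F) (hwL : WConv Lm Lg) {t : ℝ} (ht : ContinuousAt (star F Lg) t)
    {ε : ℝ} (hε : 0 < ε) :
    ∃ N, ∀ n ≥ N, ∀ m ≥ N, star F Lg t - ε < star (Fn n) (Lm m) t := by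
  by_contra hcon
  push_neg at hcon
  choose φ hφ ψ hψ hbad using hcon
  have hφt : Tendsto φ atTop atTop := tendsto_atTop_mono hφ tendsto_id
  have hψt : Tendsto ψ atTop atTop := tendsto_atTop_mono hψ tendsto_id
  have hcw := hc (fun k => Fn (φ k)) (fun k => Lm (ψ k)) F Lg (fun k => hFn _)
    (fun k => hLm _) hF hLg (wconv_comp hwF hφt) (wconv_comp hwL hψt)
  have htd := hcw t ht
  have := le_of_tendsto' htd hbad
  linarith

lemma key_upper {star : (ℝ → ℝ) → (ℝ → ℝ) → (ℝ → ℝ)} (tri : IsTriangle star)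
    (hc : StarCont star) (L : ℝ → ℝ) (R Q : ℕ → ℝ → ℝ)
    (hR : ∀ k, MemDP (R k)) (hQ : ∀ k, MemDP (Q k))
    (hQ0 : WConv Q H0) (hRL : ∀ k s, star (R k) (Q k) s ≤ L s)
    {t c : ℝ} (ht : 0 < t) (hc0 : 0 ≤ c) (hc1 : c ≤ 1)
    (hRt : ∀ k, c ≤ R k t) : ∀ s, t < s → c ≤ L s := by
  have hF' : MemDP (fun s => if t < s then c else 0) := memDP_jf hc0 hc1 ht.le
  have hle : ∀ k, dpLE (fun s => if t < s then c else 0) (R k) := by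
    intro k u
    show (if t < u then c else 0) ≤ R k u
    split_ifs with hu
    · exact le_trans (hRt k) ((hR k).1 hu.le)
    · exact (hR k).2.1 u
  have h1 : ∀ k s, star (fun s => if t < s then c else 0) (Q k) s ≤ L s :=
    fun k s => le_trans (tri.mono _ (R k) (Q k) hF' (hR k) (hQ k) (hle k) s) (hRL k s)
  have hcw : WConv (fun k => star (fun s => if t < s then c else 0) (Q k))
      (star (fun s => if t < s then c else 0) H0) :=
    hc (fun _ => fun s => if t < s then c else 0) Q _ H0 (fun _ => hF') hQ hF' memDP_H0
      (fun t' _ => tendsto_const_nhds) hQ0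
  rw [tri.ident _ hF'] at hcw
  intro s hs
  have hcs : ContinuousAt (fun s => if t < s then c else 0) s := by
    have hev : (fun s => if t < s then c else 0) =ᶠ[nhds s] fun _ => c := by
      filter_upwards [Ioi_mem_nhds hs] with u hu
      exact if_pos hu
    exact hev.continuousAt
  have htd := hcw s hcs
  have hFs : (if t < s then c else 0) = c := if_pos hs
  rw [show (fun s => if t < s then c else 0) s = c from hFs] at htd
  exact le_of_tendsto htd (Eventually.of_forall fun k => h1 k s)

lemma lip_selfH0 {G : Type} {D : G → G → ℝ → ℝ} {star : (ℝ → ℝ) → (ℝ → ℝ) → (ℝ → ℝ)}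
    (h : IsPMS D star) {f : G → ℝ → ℝ} (hf : Lip1 D star f) {a : ℕ → G}
    (ha : PCauchy D a) (hfa : ∀ x, WConv (fun n => D (a n) x) (f x)) :
    WConv (fun n => f (a n)) H0 := by
  intro t ht
  have ht0 : t ≠ 0 := by
    rintro rfl
    have h1 : Tendsto H0 (nhdsWithin 0 (Ioi 0)) (nhds (H0 0)) := ht.continuousWithinAt
    have h2 : Tendsto H0 (nhdsWithin (0:ℝ) (Ioi 0)) (nhds 1) := by
      refine Tendsto.congr' ?_ tendsto_const_nhds
      filter_upwards [self_mem_nhdsWithin] with s hs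
      exact (if_pos hs).symm
    have h3 := tendsto_nhds_unique h1 h2
    rw [show H0 (0:ℝ) = 0 from if_neg (lt_irrefl 0)] at h3
    norm_num at h3
  rcases ht0.lt_or_gt with htn | htp
  · have hH : H0 t = 0 := if_neg (not_lt.2 htn.le)
    rw [hH]
    exact Tendsto.congr (fun n => ((hf.1 (a n)).2.2.2.2 t htn.le).symm) tendsto_const_nhds
  · have hH : H0 t = 1 := if_pos htp
    rw [hH, Metric.tendsto_atTop]
    intro ε hε
    obtain ⟨N, hN⟩ := ha (t/2) (by linarith) (ε/2) (by linarith)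
    refine ⟨N, fun n hn => ?_⟩
    obtain ⟨s, hsmem, hscont⟩ := exists_cont (hf.1 (a n)).1 (show t/2 < t by linarith)
    have htd := hfa (a n) s hscont
    have hge : 1 - ε/2 ≤ f (a n) s := by
      refine ge_of_tendsto htd ?_
      filter_upwards [eventually_ge_atTop N] with p hp
      exact le_trans (hN p hp n hn) ((h.mem (a p) (a n)).1 hsmem.1.le)
    have h2 : f (a n) s ≤ f (a n) t := (hf.1 (a n)).1 hsmem.2.le
    have h3 : f (a n) t ≤ 1 := (hf.1 (a n)).2.2.1 t
    rw [Real.dist_eq, abs_lt]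
    constructor <;> linarith

end Stmt13Aux

/-- for f,g ∈ Π(G) with associated Cauchy sequences (a_n),(b_n),
sup_x f(x) ⋆ g(x) = lim_{n,m} D(a_n,b_m) = lim_n D(a_n,b_n) = lim_m f(b_m) = lim_n g(a_n). -/
theorem stmt13 {G : Type} (D : G → G → ℝ → ℝ)
    (star : (ℝ → ℝ) → (ℝ → ℝ) → (ℝ → ℝ)) (h : IsPMS D star)
    (hc : StarCont star) (f g : G → ℝ → ℝ)
    (hf : Lip1 D star f) (hg : Lip1 D star g) (a b : ℕ → G)
    (ha : PCauchy D a) (hb : PCauchy D b)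
    (hfa : ∀ x, WConv (fun n => D (a n) x) (f x))
    (hgb : ∀ x, WConv (fun n => D (b n) x) (g x)) :
    WConv (fun n => D (a n) (b n)) (DD star f g) ∧
    WConv (fun m => f (b m)) (DD star f g) ∧
    WConv (fun n => g (a n)) (DD star f g) ∧
    (∀ t, ContinuousAt (DD star f g) t →
      Tendsto (fun p : ℕ × ℕ => D (a p.1) (b p.2) t) atTop
        (nhds (DD star f g t))) := by
  classical
  haveI : Nonempty G := ⟨a 0⟩
  set L := DD star f g with hLdef
  have hmemS : ∀ x : G, MemDP (star (f x) (g x)) := fun x => h.tri.mem _ _ (hf.1 x) (hg.1 x)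
  have hbdd : ∀ s : ℝ, BddAbove (range fun x => star (f x) (g x) s) := by
    intro s
    refine ⟨1, ?_⟩
    rintro y ⟨x, rfl⟩
    exact (hmemS x).2.2.1 s
  have hLle : ∀ x s, star (f x) (g x) s ≤ L s := fun x s => le_ciSup (hbdd s) x
  have hgf : ∀ x s, star (g x) (f x) s ≤ L s := by
    intro x s
    rw [h.tri.comm (g x) (f x) (hg.1 x) (hf.1 x)]
    exact hLle x s
  have hL0 : ∀ s, 0 ≤ L s := fun s => le_trans ((hmemS (a 0)).2.1 s) (hLle (a 0) s)
  have hfaH0 : WConv (fun n => f (a n)) H0 := lip_selfH0 h hf ha hfa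
  have hgbH0 : WConv (fun n => g (b n)) H0 := lip_selfH0 h hg hb hgb
  have htri : ∀ (x : G) n m s, star (D (a n) x) (D (b m) x) s ≤ D (a n) (b m) s := by
    intro x n m s
    have h1 := h.triangle_ineq (a n) x (b m) s
    rwa [h.symm x (b m)] at h1
  have hfb : ∀ n m, dpLE (star (D (a n) (b m)) (f (a n))) (f (b m)) := by
    intro n m
    have h1 := hf.2 (b m) (a n)
    rwa [h.symm (b m) (a n)] at h1
  -- KEY LOWER BOUND
  have KL : ∀ t ε, 0 < ε → ∃ t'' < t, ∃ N, ∀ n ≥ N, ∀ m ≥ N,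
      L t - ε < D (a n) (b m) t'' := by
    intro t ε hε
    have hlt : L t - ε/2 < ⨆ x, star (f x) (g x) t := by
      have he : (⨆ x, star (f x) (g x) t) = L t := rfl
      rw [he]; linarith
    obtain ⟨x, hx⟩ := exists_lt_of_lt_ciSup hlt
    have hS : MemDP (star (f x) (g x)) := hmemS x
    have hev : ∀ᶠ s in nhdsWithin t (Iio t), L t - ε/2 < star (f x) (g x) s :=
      (hS.2.2.2.1 t).eventually (eventually_gt_nhds hx)
    obtain ⟨t', ht'⟩ := (hev.and eventually_mem_nhdsWithin).exists
    obtain ⟨t'', ht''mem, ht''cont⟩ := exists_cont hS.1 ht'.2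
    have hSt'' : L t - ε/2 < star (f x) (g x) t'' :=
      lt_of_lt_of_le ht'.1 (hS.1 ht''mem.1.le)
    obtain ⟨N, hN⟩ := lower_pair hc (fun n => h.mem (a n) x) (fun m => h.mem (b m) x)
      (hf.1 x) (hg.1 x) (hfa x) (hgb x) ht''cont (half_pos hε)
    refine ⟨t'', ht''mem.2, N, fun n hn m hm => ?_⟩
    have h1 := hN n hn m hm
    have h2 := htri x n m t''
    linarith
  -- KEY UPPER BOUND for D(a n, b m)
  have KU : ∀ t, ContinuousAt L t → ∀ ε, 0 < ε → ∃ N, ∀ n ≥ N, ∀ m ≥ N,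
      D (a n) (b m) t < L t + ε := by
    intro t hLt ε hε
    rcases le_or_gt t 0 with ht0 | ht0
    · exact ⟨0, fun n _ m _ => by
        rw [(h.mem (a n) (b m)).2.2.2.2 t ht0]; linarith [hL0 t]⟩
    by_contra hcon
    push_neg at hcon
    choose φ hφ ψ hψ hbad using hcon
    have hφt : Tendsto φ atTop atTop := tendsto_atTop_mono hφ tendsto_id
    have hψt : Tendsto ψ atTop atTop := tendsto_atTop_mono hψ tendsto_id
    have hQ0 : WConv (fun k => star (f (a (φ k))) (g (b (ψ k)))) H0 := by
      have h1 := hc (fun k => f (a (φ k))) (fun k => g (b (ψ k))) H0 H0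
        (fun k => hf.1 _) (fun k => hg.1 _) memDP_H0 memDP_H0
        (wconv_comp hfaH0 hφt) (wconv_comp hgbH0 hψt)
      rwa [h.tri.ident H0 memDP_H0] at h1
    have hRL : ∀ k s,
        star (D (a (φ k)) (b (ψ k))) (star (f (a (φ k))) (g (b (ψ k)))) s ≤ L s := by
      intro k s
      rw [h.tri.assoc _ _ _ (h.mem _ _) (hf.1 _) (hg.1 _)]
      refine le_trans (h.tri.mono _ (f (b (ψ k))) _
        (h.tri.mem _ _ (h.mem _ _) (hf.1 _)) (hf.1 _) (hg.1 _) (hfb (φ k) (ψ k)) s)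
        (hLle (b (ψ k)) s)
    have hkey := key_upper h.tri hc L (fun k => D (a (φ k)) (b (ψ k)))
      (fun k => star (f (a (φ k))) (g (b (ψ k)))) (fun k => h.mem _ _)
      (fun k => h.tri.mem _ _ (hf.1 _) (hg.1 _)) hQ0 hRL ht0
      (by linarith [hL0 t]) (le_trans (hbad 0) ((h.mem _ _).2.2.1 t)) hbad
    have hT : Tendsto L (nhdsWithin t (Ioi t)) (nhds (L t)) := hLt.continuousWithinAt
    have h2 : L t + ε ≤ L t := ge_of_tendsto hT
      (by filter_upwards [eventually_mem_nhdsWithin] with s hs using hkey s hs)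
    linarith
  -- GOAL 4 : double limit
  have G4 : ∀ t, ContinuousAt L t →
      Tendsto (fun p : ℕ × ℕ => D (a p.1) (b p.2) t) atTop (nhds (L t)) := by
    intro t hLt
    rw [Metric.tendsto_atTop]
    intro ε hε
    obtain ⟨t'', ht'', N1, hN1⟩ := KL t (ε/2) (by linarith)
    obtain ⟨N2, hN2⟩ := KU t hLt (ε/2) (by linarith)
    refine ⟨(max N1 N2, max N1 N2), fun p hp => ?_⟩
    have h1 := hN1 p.1 (le_trans (le_max_left _ _) hp.1) p.2 (le_trans (le_max_left _ _) hp.2)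
    have h2 := hN2 p.1 (le_trans (le_max_right _ _) hp.1) p.2 (le_trans (le_max_right _ _) hp.2)
    have h3 : D (a p.1) (b p.2) t'' ≤ D (a p.1) (b p.2) t := (h.mem (a p.1) (b p.2)).1 ht''.le
    rw [Real.dist_eq, abs_lt]
    constructor <;> linarith
  -- GOAL 1 : diagonal
  have G1 : WConv (fun n => D (a n) (b n)) L := by
    intro t hLt
    have hdiag : Tendsto (fun n : ℕ => (n, n)) atTop (atTop : Filter (ℕ × ℕ)) := by
      rw [← prod_atTop_atTop_eq]
      exact tendsto_id.prodMk tendsto_id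
    exact (G4 t hLt).comp hdiag
  -- GOAL 2 : f (b m)
  have G2 : WConv (fun m => f (b m)) L := by
    intro t hLt
    rw [Metric.tendsto_atTop]
    intro ε hε
    have hup : ∃ N, ∀ m ≥ N, f (b m) t < L t + ε/2 := by
      rcases le_or_gt t 0 with ht0 | ht0
      · exact ⟨0, fun m _ => by rw [(hf.1 (b m)).2.2.2.2 t ht0]; linarith [hL0 t]⟩
      by_contra hcon
      push_neg at hcon
      choose ψ hψ hbad using hcon
      have hψt : Tendsto ψ atTop atTop := tendsto_atTop_mono hψ tendsto_id
      have hkey := key_upper h.tri hc L (fun k => f (b (ψ k))) (fun k => g (b (ψ k)))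
        (fun k => hf.1 _) (fun k => hg.1 _) (wconv_comp hgbH0 hψt)
        (fun k s => hLle (b (ψ k)) s) ht0 (by linarith [hL0 t])
        (le_trans (hbad 0) ((hf.1 _).2.2.1 t)) hbad
      have hT : Tendsto L (nhdsWithin t (Ioi t)) (nhds (L t)) := hLt.continuousWithinAt
      have h2 : L t + ε/2 ≤ L t := ge_of_tendsto hT
        (by filter_upwards [eventually_mem_nhdsWithin] with s hs using hkey s hs)
      linarith
    have hlow : ∃ N, ∀ m ≥ N, L t - ε/2 < f (b m) t := by
      obtain ⟨t'', ht''lt, N, hN⟩ := KL t (ε/4) (by linarith)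
      refine ⟨N, fun m hm => ?_⟩
      obtain ⟨s, hsmem, hscont⟩ := exists_cont (hf.1 (b m)).1 ht''lt
      have htd := hfa (b m) s hscont
      have hge : L t - ε/4 ≤ f (b m) s := by
        refine ge_of_tendsto htd ?_
        filter_upwards [eventually_ge_atTop N] with n hn
        exact le_trans (hN n hn m hm).le ((h.mem (a n) (b m)).1 hsmem.1.le)
      have h2 : f (b m) s ≤ f (b m) t := (hf.1 (b m)).1 hsmem.2.le
      linarith
    obtain ⟨N1, h1⟩ := hup
    obtain ⟨N2, h2⟩ := hlow
    refine ⟨max N1 N2, fun m hm => ?_⟩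
    have u1 := h1 m (le_trans (le_max_left _ _) hm)
    have u2 := h2 m (le_trans (le_max_right _ _) hm)
    rw [Real.dist_eq, abs_lt]
    constructor <;> linarith
  -- GOAL 3 : g (a n)
  have G3 : WConv (fun n => g (a n)) L := by
    intro t hLt
    rw [Metric.tendsto_atTop]
    intro ε hε
    have hup : ∃ N, ∀ n ≥ N, g (a n) t < L t + ε/2 := by
      rcases le_or_gt t 0 with ht0 | ht0
      · exact ⟨0, fun n _ => by rw [(hg.1 (a n)).2.2.2.2 t ht0]; linarith [hL0 t]⟩
      by_contra hcon
      push_neg at hcon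
      choose φ hφ hbad using hcon
      have hφt : Tendsto φ atTop atTop := tendsto_atTop_mono hφ tendsto_id
      have hkey := key_upper h.tri hc L (fun k => g (a (φ k))) (fun k => f (a (φ k)))
        (fun k => hg.1 _) (fun k => hf.1 _) (wconv_comp hfaH0 hφt)
        (fun k s => hgf (a (φ k)) s) ht0 (by linarith [hL0 t])
        (le_trans (hbad 0) ((hg.1 _).2.2.1 t)) hbad
      have hT : Tendsto L (nhdsWithin t (Ioi t)) (nhds (L t)) := hLt.continuousWithinAt
      have h2 : L t + ε/2 ≤ L t := ge_of_tendsto hT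
        (by filter_upwards [eventually_mem_nhdsWithin] with s hs using hkey s hs)
      linarith
    have hlow : ∃ N, ∀ n ≥ N, L t - ε/2 < g (a n) t := by
      obtain ⟨t'', ht''lt, N, hN⟩ := KL t (ε/4) (by linarith)
      refine ⟨N, fun n hn => ?_⟩
      obtain ⟨s, hsmem, hscont⟩ := exists_cont (hg.1 (a n)).1 ht''lt
      have htd := hgb (a n) s hscont
      have hge : L t - ε/4 ≤ g (a n) s := by
        refine ge_of_tendsto htd ?_
        filter_upwards [eventually_ge_atTop N] with m hm
        have e1 : D (b m) (a n) t'' = D (a n) (b m) t'' := by rw [h.symm (b m) (a n)]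
        have e2 : D (b m) (a n) t'' ≤ D (b m) (a n) s := (h.mem (b m) (a n)).1 hsmem.1.le
        have e3 := hN n hn m hm
        linarith
      have h2 : g (a n) s ≤ g (a n) t := (hg.1 (a n)).1 hsmem.2.le
      linarith
    obtain ⟨N1, h1⟩ := hup
    obtain ⟨N2, h2⟩ := hlow
    refine ⟨max N1 N2, fun n hn => ?_⟩
    have u1 := h1 n (le_trans (le_max_left _ _) hn)
    have u2 := h2 n (le_trans (le_max_right _ _) hn)
    rw [Real.dist_eq, abs_lt]
    constructor <;> linarith
  exact ⟨G1, G2, G3, G4⟩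
end
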